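/- Let f be a Fréchet differentiable pseudolinear function on an open convex set S in a real Banach space E. Then for all x, y ∈ S and λ ∈ (0,1), there exists a number b > 0 with 0 < λ·b < 1 (when f(x) ≠ f(y); with λ·b ≤ 1 in general) such that f(x + λ(y − x)) = λ·b·f(y) + (1 − λ·b)·f(x). -/

import Mathlib

def Pseudoconvex {E : Type*} [NormedAddCommGroup E] [NormedSpace ℝ E]
    (S : Set E) (f : E → ℝ) (f' : E → E →L[ℝ] ℝ) : Prop :=
  ∀ x ∈ S, ∀ y ∈ S, f y < f x → f' x (y - x) < 0

def Pseudolinear {E : Type*} [NormedAddCommGroup E] [NormedSpace ℝ E]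
    (S : Set E) (f : E → ℝ) (f' : E → E →L[ℝ] ℝ) : Prop :=
  Pseudoconvex S f f' ∧ Pseudoconvex S (fun x => -f x) (fun x => -(f' x))

section Aux

variable {E : Type*} [NormedAddCommGroup E] [NormedSpace ℝ E]
  {S : Set E} {f : E → ℝ} {f' : E → E →L[ℝ] ℝ}

/-- easy direction: zero derivative along segment implies equal values -/
lemma pl_eq_of_deriv_zero (hpl : Pseudolinear S f f') {x y : E} (hx : x ∈ S) (hy : y ∈ S)
    (h : f' x (y - x) = 0) : f y = f x := by
  rcases lt_trichotomy (f y) (f x) with hlt | heq | hgt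
  · exact absurd (hpl.1 x hx y hy hlt) (by rw [h]; exact lt_irrefl 0)
  · exact heq
  · have := hpl.2 x hx y hy (by simpa using hgt)
    simp [h] at this

lemma seg_mem (hSc : Convex ℝ S) {x y : E} (hx : x ∈ S) (hy : y ∈ S) {t : ℝ}
    (ht0 : 0 ≤ t) (ht1 : t ≤ 1) : x + t • (y - x) ∈ S := by
  have : x + t • (y - x) = (1 - t) • x + t • y := by
    rw [smul_sub, sub_smul, one_smul]; abel
  rw [this]
  exact hSc hx hy (by linarith) ht0 (by ring)

/-- value on segment is between values at endpoints -/
lemma pl_between (hSc : Convex ℝ S) (hpl : Pseudolinear S f f') {x y : E} (hx : x ∈ S)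
    (hy : y ∈ S) {t : ℝ} (ht : t ∈ Set.Ioo (0:ℝ) 1) :
    min (f x) (f y) ≤ f (x + t • (y - x)) ∧ f (x + t • (y - x)) ≤ max (f x) (f y) := by
  set z := x + t • (y - x) with hzdef
  have hz : z ∈ S := seg_mem hSc hx hy ht.1.le ht.2.le
  have hxz : x - z = (-t) • (y - x) := by rw [hzdef]; module
  have hyz : y - z = (1 - t) • (y - x) := by rw [hzdef]; module
  constructor
  · by_contra hcon
    push_neg at hcon
    have h1 : f z < f x := lt_of_lt_of_le hcon (min_le_left _ _)
    have h2 : f z < f y := lt_of_lt_of_le hcon (min_le_right _ _)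
    -- -f pseudoconvex at z : f z < f w → f' z (w - z) > 0
    have d1 : 0 < f' z (x - z) := by
      have := hpl.2 z hz x hx (by simpa using h1)
      simpa using this
    have d2 : 0 < f' z (y - z) := by
      have := hpl.2 z hz y hy (by simpa using h2)
      simpa using this
    rw [hxz, map_smul] at d1
    rw [hyz, map_smul] at d2
    simp only [smul_eq_mul] at d1 d2
    nlinarith [ht.1, ht.2]
  · by_contra hcon
    push_neg at hcon
    have h1 : f x < f z := lt_of_le_of_lt (le_max_left _ _) hcon
    have h2 : f y < f z := lt_of_le_of_lt (le_max_right _ _) hcon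
    have d1 : f' z (x - z) < 0 := hpl.1 z hz x hx h1
    have d2 : f' z (y - z) < 0 := hpl.1 z hz y hy h2
    rw [hxz, map_smul] at d1
    rw [hyz, map_smul] at d2
    simp only [smul_eq_mul] at d1 d2
    nlinarith [ht.1, ht.2]

/-- if f x = f y then f is constant on the segment -/
lemma pl_const_seg (hSc : Convex ℝ S) (hpl : Pseudolinear S f f') {x y : E} (hx : x ∈ S)
    (hy : y ∈ S) (hfe : f x = f y) {t : ℝ} (ht0 : 0 ≤ t) (ht1 : t ≤ 1) :
    f (x + t • (y - x)) = f x := by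
  rcases eq_or_lt_of_le ht0 with h0 | h0
  · simp [← h0]
  rcases eq_or_lt_of_le ht1 with h1 | h1
  · simp [h1, hfe]
  have := pl_between hSc hpl hx hy (t := t) ⟨h0, h1⟩
  rw [← hfe, min_self, max_self] at this
  linarith [this.1, this.2]

/-- Chew-Choo: equal values imply zero directional derivative -/
lemma pl_deriv_zero (hSc : Convex ℝ S) (hpl : Pseudolinear S f f')
    (hdiff : ∀ x ∈ S, HasFDerivAt f (f' x) x) {x y : E} (hx : x ∈ S) (hy : y ∈ S)
    (hfe : f x = f y) : f' x (y - x) = 0 := by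
  set g : ℝ → E := fun t => x + t • (y - x) with hg
  have hline : HasDerivAt g (y - x) 0 := by
    have : HasDerivAt (fun t : ℝ => t • (y - x)) ((1:ℝ) • (y - x)) 0 :=
      (hasDerivAt_id (0:ℝ)).smul_const (y - x)
    have h2 := this.const_add x
    rw [one_smul] at h2
    exact h2
  have hcomp : HasDerivAt (f ∘ g) (f' x (y - x)) 0 := by
    have hgx : g 0 = x := by simp [hg]
    have := (hgx ▸ hdiff x hx : HasFDerivAt f (f' (x)) (g 0)).comp_hasDerivAt 0 hline
    simpa using this
  have hconst : HasDerivWithinAt (f ∘ g) 0 (Set.Icc (0:ℝ) 1) 0 := by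
    have : HasDerivWithinAt (fun _ : ℝ => f x) 0 (Set.Icc (0:ℝ) 1) 0 :=
      (hasDerivWithinAt_const _ _ _)
    refine this.congr (fun t htm => ?_) (by simp [hg])
    exact (pl_const_seg hSc hpl hx hy hfe htm.1 htm.2)
  have huniq := (uniqueDiffOn_Icc_zero_one 0 (by norm_num)).eq_deriv _
    (hcomp.hasDerivWithinAt) hconst
  exact huniq

end Aux

theorem stmt_6 {E : Type*} [NormedAddCommGroup E] [NormedSpace ℝ E] [CompleteSpace E]
    {S : Set E} (hSo : IsOpen S) (hSc : Convex ℝ S)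
    (f : E → ℝ) (f' : E → E →L[ℝ] ℝ)
    (hdiff : ∀ x ∈ S, HasFDerivAt f (f' x) x)
    (hpl : Pseudolinear S f f') :
    ∀ x ∈ S, ∀ y ∈ S, ∀ l ∈ Set.Ioo (0:ℝ) 1,
      ∃ b : ℝ, 0 < b ∧ l * b ≤ 1 ∧ (f x ≠ f y → l * b < 1) ∧
        f (x + l • (y - x)) = l * b * f y + (1 - l * b) * f x := by
  intro x hx y hy l hl
  set z := x + l • (y - x) with hzdef
  have hz : z ∈ S := seg_mem hSc hx hy hl.1.le hl.2.le
  by_cases hfe : f x = f y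
  · refine ⟨1, one_pos, by linarith [hl.2], fun h => absurd hfe h, ?_⟩
    rw [pl_const_seg hSc hpl hx hy hfe hl.1.le hl.2.le, ← hfe]
    ring
  · -- strict betweenness
    have hxz : x - z = (-l) • (y - x) := by rw [hzdef]; module
    have hyz : y - z = (1 - l) • (y - x) := by rw [hzdef]; module
    have hzx : f z ≠ f x := by
      intro h
      have hd : f' z (x - z) = 0 := pl_deriv_zero hSc hpl hdiff hz hx h
      have hd2 : f' z (y - z) = 0 := by
        rw [hxz, map_smul, smul_eq_mul] at hd
        rw [hyz, map_smul, smul_eq_mul]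
        have hne : (-l) ≠ 0 := by intro h'; linarith [hl.1, neg_eq_zero.mp h']
        have : f' z (y - x) = 0 := by
          rcases mul_eq_zero.mp hd with h' | h'
          · exact absurd h' hne
          · exact h'
        rw [this]; ring
      have := pl_eq_of_deriv_zero hpl hz hy hd2
      exact hfe (h ▸ this.symm ▸ rfl)
    have hzy : f z ≠ f y := by
      intro h
      have hd : f' z (y - z) = 0 := pl_deriv_zero hSc hpl hdiff hz hy h
      have hd2 : f' z (x - z) = 0 := by
        rw [hyz, map_smul, smul_eq_mul] at hd
        rw [hxz, map_smul, smul_eq_mul]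
        have hne : (1 - l) ≠ 0 := by intro h'; linarith [hl.2]
        have : f' z (y - x) = 0 := by
          rcases mul_eq_zero.mp hd with h' | h'
          · exact absurd h' hne
          · exact h'
        rw [this]; ring
      have := pl_eq_of_deriv_zero hpl hz hx hd2
      exact hfe (this ▸ h)
    have hbtw := pl_between hSc hpl hx hy (t := l) hl
    -- f z strictly between f x and f y
    set μ : ℝ := (f z - f x) / (f y - f x) with hμ
    have hne : f y - f x ≠ 0 := fun h => hfe (by linarith [sub_eq_zero.mp h])
    have hμ01 : 0 < μ ∧ μ < 1 := by
      rcases lt_or_gt_of_ne (fun h => hfe h : f x ≠ f y) with hlt | hgt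
      · have h1 : f x < f z := lt_of_le_of_ne (by
          have := hbtw.1; rw [min_eq_left hlt.le] at this; exact this) (Ne.symm hzx)
        have h2 : f z < f y := lt_of_le_of_ne (by
          have := hbtw.2; rw [max_eq_right hlt.le] at this; exact this) hzy
        constructor
        · exact div_pos (by linarith) (by linarith)
        · rw [hμ, div_lt_one (by linarith)]; linarith
      · have h1 : f y < f z := lt_of_le_of_ne (by
          have := hbtw.1; rw [min_eq_right hgt.le] at this; exact this) (Ne.symm hzy)
        have h2 : f z < f x := lt_of_le_of_ne (by
          have := hbtw.2; rw [max_eq_left hgt.le] at this; exact this) hzx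
        constructor
        · exact div_pos_of_neg_of_neg (by linarith) (by linarith)
        · rw [hμ, div_lt_one_of_neg (by linarith)]; linarith
    refine ⟨μ / l, div_pos hμ01.1 hl.1, ?_, ?_, ?_⟩
    · have : l * (μ / l) = μ := by rw [mul_comm]; exact div_mul_cancel₀ _ (ne_of_gt hl.1)
      rw [this]; exact hμ01.2.le
    · intro _
      have : l * (μ / l) = μ := by rw [mul_comm]; exact div_mul_cancel₀ _ (ne_of_gt hl.1)
      rw [this]; exact hμ01.2
    · have hlb : l * (μ / l) = μ := by rw [mul_comm]; exact div_mul_cancel₀ _ (ne_of_gt hl.1)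
      rw [hlb, hμ]
      field_simp
      ring
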